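/- Let W1 and W2 be B-DMCs with finite output alphabets Y1 and Y2, and let (W⁻, W⁺) be their irregular kernel transform. Then Z(W⁻) + Z(W⁺) ≤ Z(W1) + Z(W2) (the one-step supermartingale property of the averaged Bhattacharyya parameter under the irregular kernel transform). -/

import Mathlib

open Finset Real


/-- A binary-input discrete memoryless channel (B-DMC): nonnegative entries
and each row (fixed input) sums to 1. -/
def IsBDMC {Y : Type*} [Fintype Y] (W : Y → ZMod 2 → ℝ) : Prop :=
  (∀ y x, 0 ≤ W y x) ∧ (∀ x, ∑ y, W y x = 1)

/-- Bhattacharyya parameter Z(W). -/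
noncomputable def bhatt {Y : Type*} [Fintype Y] (W : Y → ZMod 2 → ℝ) : ℝ :=
  ∑ y, Real.sqrt (W y 0 * W y 1)

/-- The minus-channel W⁻ of the irregular kernel transform. -/
noncomputable def Wminus {Y1 Y2 : Type*} (W1 : Y1 → ZMod 2 → ℝ)
    (W2 : Y2 → ZMod 2 → ℝ) : Y1 × Y2 → ZMod 2 → ℝ :=
  fun y u1 => ∑ u2 : ZMod 2, (1 / 2) * W1 y.1 (u1 + u2) * W2 y.2 u2

/-- The plus-channel W⁺ of the irregular kernel transform. -/
noncomputable def Wplus {Y1 Y2 : Type*} (W1 : Y1 → ZMod 2 → ℝ)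
    (W2 : Y2 → ZMod 2 → ℝ) : Y1 × Y2 × ZMod 2 → ZMod 2 → ℝ :=
  fun y u2 => (1 / 2) * W1 y.1 (y.2.2 + u2) * W2 y.2.1 u2



lemma sum_zmod2 (f : ZMod 2 → ℝ) : ∑ x, f x = f 0 + f 1 := by
  rw [show (Finset.univ : Finset (ZMod 2)) = {0, 1} from by decide,
    Finset.sum_insert (by decide), Finset.sum_singleton]

lemma key_ineq (a b c d : ℝ) (ha : 0 ≤ a) (hb : 0 ≤ b) (hc : 0 ≤ c) (hd : 0 ≤ d) :
    Real.sqrt ((1/2*(a*c)+1/2*(b*d)) * (1/2*(b*c)+1/2*(a*d)))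
      + Real.sqrt (a*b) * Real.sqrt (c*d)
    ≤ Real.sqrt (a*b) * ((c+d)/2) + Real.sqrt (c*d) * ((a+b)/2) := by
  set s := Real.sqrt (a*b) with hs_def
  set t := Real.sqrt (c*d) with ht_def
  have hs : 0 ≤ s := Real.sqrt_nonneg _
  have ht : 0 ≤ t := Real.sqrt_nonneg _
  have hs2 : s^2 = a*b := Real.sq_sqrt (mul_nonneg ha hb)
  have ht2 : t^2 = c*d := Real.sq_sqrt (mul_nonneg hc hd)
  have h2s : s ≤ (a+b)/2 := by
    rw [hs_def, show (a+b)/2 = Real.sqrt (((a+b)/2)^2) from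
      (Real.sqrt_sq (by positivity)).symm]
    exact Real.sqrt_le_sqrt (by nlinarith [sq_nonneg (a-b)])
  have h2t : t ≤ (c+d)/2 := by
    rw [ht_def, show (c+d)/2 = Real.sqrt (((c+d)/2)^2) from
      (Real.sqrt_sq (by positivity)).symm]
    exact Real.sqrt_le_sqrt (by nlinarith [sq_nonneg (c-d)])
  have hRnn : 0 ≤ s * ((c+d)/2) + t * ((a+b)/2) - s*t := by nlinarith
  have hX : (1/2*(a*c)+1/2*(b*d)) * (1/2*(b*c)+1/2*(a*d))
      ≤ (s * ((c+d)/2) + t * ((a+b)/2) - s*t)^2 := by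
    have hkey : 0 ≤ s*t*(((c+d)/2 - t) * ((a+b)/2 - s)) := by
      apply mul_nonneg (mul_nonneg hs ht)
      exact mul_nonneg (by linarith) (by linarith)
    have hid : (s * ((c+d)/2) + t * ((a+b)/2) - s*t)^2
        - (1/2*(a*c)+1/2*(b*d)) * (1/2*(b*c)+1/2*(a*d))
        = 2 * (s*t*(((c+d)/2 - t) * ((a+b)/2 - s))) := by
      linear_combination ((c^2+d^2)/4) * hs2 + ((a^2+b^2)/4) * ht2 - (s^2/2) * ht2 - (t^2/2) * hs2
    linarith [hkey, hid]
  calc Real.sqrt ((1/2*(a*c)+1/2*(b*d)) * (1/2*(b*c)+1/2*(a*d))) + s*t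
      ≤ Real.sqrt ((s * ((c+d)/2) + t * ((a+b)/2) - s*t)^2) + s*t :=
        add_le_add (Real.sqrt_le_sqrt hX) le_rfl
    _ = (s * ((c+d)/2) + t * ((a+b)/2) - s*t) + s*t := by rw [Real.sqrt_sq hRnn]
    _ = s * ((c+d)/2) + t * ((a+b)/2) := by ring

theorem bhatt_kernel_supermartingale {Y1 Y2 : Type*} [Fintype Y1] [Fintype Y2]
    (W1 : Y1 → ZMod 2 → ℝ) (W2 : Y2 → ZMod 2 → ℝ)
    (h1 : IsBDMC W1) (h2 : IsBDMC W2) :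
    bhatt (Wminus W1 W2) + bhatt (Wplus W1 W2) ≤ bhatt W1 + bhatt W2 := by
  obtain ⟨h1n, h1s⟩ := h1
  obtain ⟨h2n, h2s⟩ := h2
  have e01 : (0 + 1 : ZMod 2) = 1 := by decide
  have e10 : (1 + 0 : ZMod 2) = 1 := by decide
  have e11 : (1 + 1 : ZMod 2) = 0 := by decide
  have eminus : bhatt (Wminus W1 W2) = ∑ y1, ∑ y2,
      Real.sqrt ((1/2*(W1 y1 0 * W2 y2 0) + 1/2*(W1 y1 1 * W2 y2 1)) *
        (1/2*(W1 y1 1 * W2 y2 0) + 1/2*(W1 y1 0 * W2 y2 1))) := by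
    rw [bhatt, Fintype.sum_prod_type]
    refine Finset.sum_congr rfl fun y1 _ => Finset.sum_congr rfl fun y2 _ => ?_
    simp only [Wminus, sum_zmod2, add_zero, e01, e10, e11]
    congr 1
    ring
  have eplus : bhatt (Wplus W1 W2) = ∑ y1, ∑ y2,
      Real.sqrt (W1 y1 0 * W1 y1 1) * Real.sqrt (W2 y2 0 * W2 y2 1) := by
    rw [bhatt, Fintype.sum_prod_type]
    refine Finset.sum_congr rfl fun y1 _ => ?_
    rw [Fintype.sum_prod_type]
    refine Finset.sum_congr rfl fun y2 _ => ?_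
    rw [sum_zmod2 (f := fun u1 => Real.sqrt (Wplus W1 W2 (y1, y2, u1) 0 * Wplus W1 W2 (y1, y2, u1) 1))]
    simp only [Wplus, add_zero, e01, e10, e11]
    have h0 : (1/2 * W1 y1 0 * W2 y2 0) * (1/2 * W1 y1 1 * W2 y2 1)
        = (1/2)^2 * ((W1 y1 0 * W1 y1 1) * (W2 y2 0 * W2 y2 1)) := by ring
    have h1 : (1/2 * W1 y1 1 * W2 y2 0) * (1/2 * W1 y1 0 * W2 y2 1)
        = (1/2)^2 * ((W1 y1 0 * W1 y1 1) * (W2 y2 0 * W2 y2 1)) := by ring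
    rw [h0, h1, Real.sqrt_mul (by positivity),
      Real.sqrt_sq (by norm_num),
      Real.sqrt_mul (mul_nonneg (h1n y1 0) (h1n y1 1))]
    ring
  have eZ1 : bhatt W1 = ∑ y1, ∑ y2,
      Real.sqrt (W1 y1 0 * W1 y1 1) * ((W2 y2 0 + W2 y2 1)/2) := by
    rw [bhatt]
    refine Finset.sum_congr rfl fun y1 _ => ?_
    rw [← Finset.mul_sum]
    have : ∑ y2, (W2 y2 0 + W2 y2 1)/2 = 1 := by
      rw [← Finset.sum_div, Finset.sum_add_distrib, h2s 0, h2s 1]; norm_num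
    rw [this, mul_one]
  have eZ2 : bhatt W2 = ∑ y1, ∑ y2,
      Real.sqrt (W2 y2 0 * W2 y2 1) * ((W1 y1 0 + W1 y1 1)/2) := by
    have hone : ∑ y1, (W1 y1 0 + W1 y1 1)/2 = 1 := by
      rw [← Finset.sum_div, Finset.sum_add_distrib, h1s 0, h1s 1]; norm_num
    calc bhatt W2 = ∑ y2, Real.sqrt (W2 y2 0 * W2 y2 1) * 1 := by simp [bhatt]
      _ = ∑ y2, ∑ y1, Real.sqrt (W2 y2 0 * W2 y2 1) * ((W1 y1 0 + W1 y1 1)/2) := by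
          refine Finset.sum_congr rfl fun y2 _ => ?_
          rw [← Finset.mul_sum, hone]
      _ = _ := Finset.sum_comm
  rw [eminus, eplus, eZ1, eZ2, ← Finset.sum_add_distrib, ← Finset.sum_add_distrib]
  refine Finset.sum_le_sum fun y1 _ => ?_
  rw [← Finset.sum_add_distrib, ← Finset.sum_add_distrib]
  refine Finset.sum_le_sum fun y2 _ => ?_
  exact key_ineq _ _ _ _ (h1n y1 0) (h1n y1 1) (h2n y2 0) (h2n y2 1)
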